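/- arXiv:2406.08674 — 4 statements merged into one kernel-verified Lean document; each statement's English description precedes it below -/
import Mathlib

section
/- Let U, V ⊆ ℂ be open sets and let ψ : U → V be a holomorphic bijection whose inverse is also holomorphic. Let h : V → ℝ be continuous, let Q ∈ ℝ, and let f : ℂ → ℝ be twice continuously differentiable with compact support contained in U. Then ∫_U (h(ψ(z)) + Q·log|ψ'(z)|)·Δf(z) dz = ∫_V h(w)·Δ(f∘ψ⁻¹)(w) dw, where f∘ψ⁻¹ is extended by 0 outside V. (This is the deterministic-field version of the statement that the Gaussian curvature of an LQG surface, defined weakly by pairing (γ/2)Φ against Δf, is invariant under the LQG coordinate change Φ ↦ Φ∘ψ + Q·log|ψ'|.) -/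
open MeasureTheory

/-- The Laplacian of `f : ℂ → ℝ`: the sum of the two second partial derivatives
(trace of the second Fréchet derivative, identifying `ℂ` with `ℝ²`). -/
noncomputable def laplacian (f : ℂ → ℝ) (z : ℂ) : ℝ :=
  fderiv ℝ (fun w => fderiv ℝ f w 1) z 1 +
    fderiv ℝ (fun w => fderiv ℝ f w Complex.I) z Complex.I

/-- real fderiv of a complex-differentiable function, applied to a vector -/
lemma fderiv_real_of_cdiff {G : ℂ → ℂ} {w v : ℂ} (hG : DifferentiableAt ℂ G w) :
    fderiv ℝ G w v = v * deriv G w := by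
  have h1 : HasFDerivAt G (ContinuousLinearMap.smulRight (1 : ℂ →L[ℂ] ℂ) (deriv G w)) w :=
    hG.hasDerivAt.hasFDerivAt
  have h2 := (h1.restrictScalars ℝ).fderiv
  rw [h2]
  simp [smul_eq_mul]

lemma fderiv_re_comp {G : ℂ → ℂ} {w v : ℂ} (hG : DifferentiableAt ℂ G w) :
    fderiv ℝ (fun x => (G x).re) w v = (v * deriv G w).re := by
  have h1 : fderiv ℝ (fun x => (G x).re) w
      = (Complex.reCLM).comp (fderiv ℝ G w) := by
    have := (Complex.reCLM.hasFDerivAt (x := G w)).comp w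
      (hG.restrictScalars ℝ).hasFDerivAt
    exact this.fderiv
  rw [h1]
  simp only [ContinuousLinearMap.coe_comp', Function.comp_apply]
  rw [fderiv_real_of_cdiff hG]
  rfl

lemma laplacian_congr {f g : ℂ → ℝ} {z : ℂ} (hfg : f =ᶠ[nhds z] g) :
    laplacian f z = laplacian g z := by
  have h1 : fderiv ℝ f =ᶠ[nhds z] fderiv ℝ g := hfg.fderiv
  unfold laplacian
  have e1 : (fun w => fderiv ℝ f w 1) =ᶠ[nhds z] (fun w => fderiv ℝ g w 1) :=
    h1.fun_comp (fun L => L 1)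
  have eI : (fun w => fderiv ℝ f w Complex.I) =ᶠ[nhds z]
      (fun w => fderiv ℝ g w Complex.I) := h1.fun_comp (fun L => L Complex.I)
  rw [e1.fderiv_eq, eI.fderiv_eq]

/-- From eventual complex differentiability, get deriv's differentiability. -/
lemma eventually_cdiff_deriv {G : ℂ → ℂ} {z : ℂ}
    (hG : ∀ᶠ w in nhds z, DifferentiableAt ℂ G w) :
    ∀ᶠ w in nhds z, DifferentiableAt ℂ (deriv G) w := by
  obtain ⟨t, ht, hto, hzt⟩ := eventually_nhds_iff.mp hG
  have hdo : DifferentiableOn ℂ G t := fun x hx => (ht x hx).differentiableWithinAt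
  have han : AnalyticOnNhd ℂ (deriv G) t := (hdo.analyticOnNhd hto).deriv
  filter_upwards [hto.mem_nhds hzt] with w hw using (han w hw).differentiableAt

/-- The real part of a holomorphic function is harmonic. -/
lemma laplacian_re_eq_zero {G : ℂ → ℂ} {z : ℂ}
    (hG : ∀ᶠ w in nhds z, DifferentiableAt ℂ G w) :
    laplacian (fun w => (G w).re) z = 0 := by
  have hG' : ∀ᶠ w in nhds z, DifferentiableAt ℂ (deriv G) w := eventually_cdiff_deriv hG
  have hdz : DifferentiableAt ℂ (deriv G) z := hG'.self_of_nhds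
  have e1 : (fun w => fderiv ℝ (fun x => (G x).re) w 1) =ᶠ[nhds z]
      (fun w => (deriv G w).re) := by
    filter_upwards [hG] with w hw
    rw [fderiv_re_comp hw, one_mul]
  have eI : (fun w => fderiv ℝ (fun x => (G x).re) w Complex.I) =ᶠ[nhds z]
      (fun w => (Complex.I * deriv G w).re) := by
    filter_upwards [hG] with w hw
    rw [fderiv_re_comp hw]
  unfold laplacian
  rw [e1.fderiv_eq, eI.fderiv_eq, fderiv_re_comp hdz, one_mul]
  have hH : DifferentiableAt ℂ (fun w => Complex.I * deriv G w) z := hdz.const_mul _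
  rw [fderiv_re_comp hH, deriv_const_mul _ hdz]
  have : Complex.I * (Complex.I * deriv (deriv G) z) = -(deriv (deriv G) z) := by
    rw [← mul_assoc, Complex.I_mul_I, neg_one_mul]
  rw [this, Complex.neg_re]
  ring

lemma log_abs_eq_re_log (c : ℂ) (hc : ‖c‖ = 1) (F : ℂ → ℂ) :
    (fun w => Real.log ‖F w‖) = fun w => (Complex.log (c * F w)).re := by
  funext w
  rw [Complex.log_re, norm_mul, hc, one_mul]

lemma log_abs_harmonic_and_smooth {F : ℂ → ℂ} {s : Set ℂ} (hso : IsOpen s)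
    (hF : DifferentiableOn ℂ F s) {z : ℂ} (hz : z ∈ s) (hFz : F z ≠ 0) :
    laplacian (fun w => Real.log ‖F w‖) z = 0 ∧
      ContDiffAt ℝ 2 (fun w => Real.log ‖F w‖) z := by
  have habsne : ‖F z‖ ≠ 0 := by simpa using hFz
  set c : ℂ := (‖F z‖ : ℂ) / F z with hc
  have habs : ‖c‖ = 1 := by
    rw [hc, norm_div, Complex.norm_real, norm_norm,
      div_self habsne]
  have heq := log_abs_eq_re_log c habs F
  have hmem : c * F z ∈ Complex.slitPlane := by
    rw [hc, div_mul_cancel₀ _ hFz]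
    exact Complex.ofReal_mem_slitPlane.mpr (norm_pos_iff.mpr hFz)
  have hGdiff : ∀ᶠ w in nhds z, DifferentiableAt ℂ (fun w => Complex.log (c * F w)) w := by
    have hFc : ContinuousAt (fun w => c * F w) z :=
      continuousAt_const.mul (hF.continuousOn.continuousAt (hso.mem_nhds hz))
    filter_upwards [hFc.eventually_mem (Complex.isOpen_slitPlane.mem_nhds hmem),
      hso.mem_nhds hz] with w hw1 hw2
    exact (Complex.differentiableAt_log hw1).comp w
      ((hF.differentiableAt (hso.mem_nhds hw2)).const_mul c)
  constructor
  · rw [heq]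
    exact laplacian_re_eq_zero hGdiff
  · rw [heq]
    obtain ⟨t, ht, hto, hzt⟩ := eventually_nhds_iff.mp hGdiff
    have hdo : DifferentiableOn ℂ (fun w => Complex.log (c * F w)) t :=
      fun x hx => (ht x hx).differentiableWithinAt
    have hG2 : ContDiffAt ℂ 2 (fun w => Complex.log (c * F w)) z :=
      (hdo.contDiffOn hto).contDiffAt (hto.mem_nhds hzt)
    exact (Complex.reCLM.contDiff.of_le le_top).contDiffAt.comp z (hG2.restrict_scalars ℝ)

lemma laplacian_comp_holomorphic {f : ℂ → ℝ} {ψ : ℂ → ℂ} {s : Set ℂ} {z : ℂ}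
    (hso : IsOpen s) (hz : z ∈ s) (hψ : DifferentiableOn ℂ ψ s)
    (hf : ContDiffAt ℝ 2 f (ψ z)) :
    laplacian (fun w => f (ψ w)) z
      = Complex.normSq (deriv ψ z) * laplacian f (ψ z) := by
  obtain ⟨t, htn, h2f⟩ : ∃ t ∈ nhds (ψ z), ContDiffOn ℝ 2 f t :=
    hf.contDiffOn le_rfl (by simp)
  obtain ⟨t', ht't, ht'o, hψzt'⟩ := mem_nhds_iff.mp htn
  have hψev : ∀ᶠ w in nhds z, DifferentiableAt ℂ ψ w := by
    filter_upwards [hso.mem_nhds hz] with w hw using hψ.differentiableAt (hso.mem_nhds hw)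
  have hψz : DifferentiableAt ℂ ψ z := hψev.self_of_nhds
  have hψcont : ContinuousAt ψ z := hψz.continuousAt
  have hmemev : ∀ᶠ w in nhds z, w ∈ s ∧ ψ w ∈ t' := by
    filter_upwards [hso.mem_nhds hz, hψcont.eventually_mem (ht'o.mem_nhds hψzt')] with w h1 h2
    exact ⟨h1, h2⟩
  have hfd : ∀ {x : ℂ}, x ∈ t' → DifferentiableAt ℝ f x := fun {x} hx =>
    (((h2f.mono ht't).contDiffAt (ht'o.mem_nhds hx)).differentiableAt two_ne_zero)
  -- eventual formula for first derivative
  have hEv : ∀ v : ℂ, (fun w => fderiv ℝ (fun x => f (ψ x)) w v) =ᶠ[nhds z]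
      (fun w => fderiv ℝ f (ψ w) (v * deriv ψ w)) := by
    intro v
    filter_upwards [hmemev, hψev] with w hw hψw
    have hcomp : fderiv ℝ (fun x => f (ψ x)) w
        = (fderiv ℝ f (ψ w)).comp (fderiv ℝ ψ w) :=
      fderiv_comp w (hfd hw.2) (hψw.restrictScalars ℝ)
    rw [hcomp]
    simp only [ContinuousLinearMap.coe_comp', Function.comp_apply]
    rw [fderiv_real_of_cdiff hψw]
  -- second derivative data
  set B := fderiv ℝ (fderiv ℝ f) (ψ z) with hB
  have hDf : DifferentiableAt ℝ (fderiv ℝ f) (ψ z) :=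
    (hf.fderiv_right (m := 1) (by norm_num)).differentiableAt one_ne_zero
  have hA : DifferentiableAt ℝ (fun w => fderiv ℝ f (ψ w)) z :=
    hDf.comp z (hψz.restrictScalars ℝ)
  have hderivψ : ∀ᶠ w in nhds z, DifferentiableAt ℂ (deriv ψ) w := eventually_cdiff_deriv hψev
  have hdψz : DifferentiableAt ℂ (deriv ψ) z := hderivψ.self_of_nhds
  have hTv : ∀ v : ℂ, fderiv ℝ (fun w => fderiv ℝ (fun x => f (ψ x)) w v) z v
      = B (v * deriv ψ z) (v * deriv ψ z)
        + fderiv ℝ f (ψ z) (v * (v * deriv (deriv ψ) z)) := by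
    intro v
    rw [(hEv v).fderiv_eq]
    have hu : DifferentiableAt ℝ (fun w => v * deriv ψ w) z :=
      (hdψz.restrictScalars ℝ).const_mul v
    rw [fderiv_clm_apply hA hu]
    simp only [ContinuousLinearMap.add_apply, ContinuousLinearMap.coe_comp',
      Function.comp_apply, ContinuousLinearMap.flip_apply]
    have h1 : fderiv ℝ (fun w => v * deriv ψ w) z v = v * (v * deriv (deriv ψ) z) := by
      rw [fderiv_const_mul (hdψz.restrictScalars ℝ) v]
      simp only [ContinuousLinearMap.coe_smul', Pi.smul_apply, smul_eq_mul]
      rw [fderiv_real_of_cdiff hdψz]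
    have h2 : fderiv ℝ (fun w => fderiv ℝ f (ψ w)) z v = B.comp (fderiv ℝ ψ z) v := by
      have hcc := fderiv_comp z hDf (hψz.restrictScalars ℝ)
      have : fderiv ℝ (fun w => fderiv ℝ f (ψ w)) z = B.comp (fderiv ℝ ψ z) := hcc
      rw [this]
    rw [h1, h2]
    simp only [ContinuousLinearMap.coe_comp', Function.comp_apply]
    rw [fderiv_real_of_cdiff hψz]
    ring_nf
  -- copy of fderiv_fderiv_apply (it is in the main file)
  have hffa : ∀ u v : ℂ, fderiv ℝ (fun w => fderiv ℝ f w v) (ψ z) u = B u v := by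
    intro u v
    have : fderiv ℝ (fun w => fderiv ℝ f w v) (ψ z)
        = (ContinuousLinearMap.apply ℝ ℝ v).comp (fderiv ℝ (fderiv ℝ f) (ψ z)) :=
      ((ContinuousLinearMap.apply ℝ ℝ v).hasFDerivAt.comp (ψ z) hDf.hasFDerivAt).fderiv
    rw [this]; rfl
  have hlapf : laplacian f (ψ z) = B 1 1 + B Complex.I Complex.I := by
    unfold laplacian
    rw [hffa 1 1, hffa Complex.I Complex.I]
  -- bilinear expansion
  have hexp : ∀ a b : ℝ, B (a • (1:ℂ) + b • Complex.I) (a • (1:ℂ) + b • Complex.I)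
      = a*a*(B 1 1) + a*b*(B 1 Complex.I) + b*a*(B Complex.I 1)
        + b*b*(B Complex.I Complex.I) := by
    intro a b
    simp only [map_add, _root_.map_smul, ContinuousLinearMap.add_apply,
      ContinuousLinearMap.smul_apply, smul_eq_mul]
    ring
  have key : ∀ c : ℂ, B c c + B (Complex.I * c) (Complex.I * c)
      = Complex.normSq c * (B 1 1 + B Complex.I Complex.I) := by
    intro c
    set a := c.re with ha
    set b := c.im with hb
    have hn : Complex.normSq c = a*a + b*b := by rw [Complex.normSq_apply]
    have h2 : Complex.I * c = (-b) • (1:ℂ) + a • Complex.I := by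
      apply Complex.ext <;> simp [ha, hb, Complex.real_smul]
    have h1 : c = a • (1:ℂ) + b • Complex.I := by
      apply Complex.ext <;> simp [ha, hb, Complex.real_smul]
    rw [hn, h2, h1, hexp, hexp]
    ring
  -- assemble
  unfold laplacian
  rw [hTv 1, hTv Complex.I]
  have hd0 : (1:ℂ) * (1 * deriv (deriv ψ) z)
      + Complex.I * (Complex.I * deriv (deriv ψ) z) = 0 := by
    have hii : Complex.I * (Complex.I * deriv (deriv ψ) z) = -deriv (deriv ψ) z := by
      rw [← mul_assoc, Complex.I_mul_I]
      ring
    rw [hii]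
    ring
  have : B (1 * deriv ψ z) (1 * deriv ψ z) + fderiv ℝ f (ψ z) (1 * (1 * deriv (deriv ψ) z))
      + (B (Complex.I * deriv ψ z) (Complex.I * deriv ψ z)
        + fderiv ℝ f (ψ z) (Complex.I * (Complex.I * deriv (deriv ψ) z)))
      = B (deriv ψ z) (deriv ψ z) + B (Complex.I * deriv ψ z) (Complex.I * deriv ψ z)
        + fderiv ℝ f (ψ z) ((1:ℂ) * (1 * deriv (deriv ψ) z)
          + Complex.I * (Complex.I * deriv (deriv ψ) z)) := by
    rw [map_add, one_mul]
    ring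
  rw [this, hd0, map_zero, add_zero, key, hffa 1 1, hffa Complex.I Complex.I]

section Green

variable {u f : ℂ → ℝ}

lemma dv_contDiff_one {g : ℂ → ℝ} (hg : ContDiff ℝ 2 g) (v : ℂ) :
    ContDiff ℝ 1 (fun x => fderiv ℝ g x v) :=
  ((ContinuousLinearMap.apply ℝ ℝ v).contDiff).comp (hg.fderiv_right (by norm_num))

lemma dv_continuous {g : ℂ → ℝ} (hg : ContDiff ℝ 1 g) (v : ℂ) :
    Continuous (fun x => fderiv ℝ g x v) :=
  (ContinuousLinearMap.apply ℝ ℝ v).continuous.comp (hg.continuous_fderiv one_ne_zero)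

lemma dv_hasCompactSupport {g : ℂ → ℝ} (hg : HasCompactSupport g) (v : ℂ) :
    HasCompactSupport (fun x => fderiv ℝ g x v) :=
  (hg.fderiv (𝕜 := ℝ)).comp_left (g := fun L : ℂ →L[ℝ] ℝ => L v) rfl

lemma green_directional (hu : ContDiff ℝ 2 u) (hcu : HasCompactSupport u)
    (hf : ContDiff ℝ 2 f) (hcf : HasCompactSupport f) (v : ℂ) :
    ∫ z, u z * fderiv ℝ (fun w => fderiv ℝ f w v) z v
      = ∫ z, fderiv ℝ (fun w => fderiv ℝ u w v) z v * f z := by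
  have hDu1 := dv_contDiff_one hu v
  have hDf1 := dv_contDiff_one hf v
  have hDuC := dv_hasCompactSupport hcu v
  have hDfC := dv_hasCompactSupport hcf v
  have hDDuCont := dv_continuous hDu1 v
  have hDDfCont := dv_continuous hDf1 v
  have hucont := hu.continuous
  have hfcont := hf.continuous
  have hDDuC := dv_hasCompactSupport hDuC v
  have step1 : ∫ z, u z * fderiv ℝ (fun w => fderiv ℝ f w v) z v
      = -∫ z, fderiv ℝ u z v * fderiv ℝ f z v := by
    apply integral_mul_fderiv_eq_neg_fderiv_mul_of_integrable
    · exact ((dv_continuous (hu.of_le one_le_two) v).mul (dv_continuous (hf.of_le one_le_two) v)).integrable_of_hasCompactSupport (hDuC.mul_right)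
    · exact (hucont.mul hDDfCont).integrable_of_hasCompactSupport (hcu.mul_right)
    · exact (hucont.mul (dv_continuous (hf.of_le one_le_two) v)).integrable_of_hasCompactSupport (hcu.mul_right)
    · exact fun x _ => hu.differentiable two_ne_zero x
    · exact fun x _ => hDf1.differentiable one_ne_zero x
  have step2 : ∫ z, fderiv ℝ u z v * fderiv ℝ f z v
      = -∫ z, fderiv ℝ (fun w => fderiv ℝ u w v) z v * f z := by
    apply integral_mul_fderiv_eq_neg_fderiv_mul_of_integrable
    · exact (hDDuCont.mul hfcont).integrable_of_hasCompactSupport (hDDuC.mul_right)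
    · exact ((dv_continuous (hu.of_le one_le_two) v).mul (dv_continuous (hf.of_le one_le_two) v)).integrable_of_hasCompactSupport (hDuC.mul_right)
    · exact ((dv_continuous (hu.of_le one_le_two) v).mul hfcont).integrable_of_hasCompactSupport (hDuC.mul_right)
    · exact fun x _ => hDu1.differentiable one_ne_zero x
    · exact fun x _ => hf.differentiable two_ne_zero x
  rw [step1, step2, neg_neg]

lemma green (hu : ContDiff ℝ 2 u) (hcu : HasCompactSupport u)
    (hf : ContDiff ℝ 2 f) (hcf : HasCompactSupport f) :
    ∫ z, u z * laplacian f z = ∫ z, laplacian u z * f z := by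
  have e1 : ∀ z, u z * laplacian f z
      = u z * fderiv ℝ (fun w => fderiv ℝ f w 1) z 1
        + u z * fderiv ℝ (fun w => fderiv ℝ f w Complex.I) z Complex.I := by
    intro z; unfold laplacian; ring
  have e2 : ∀ z, laplacian u z * f z
      = fderiv ℝ (fun w => fderiv ℝ u w 1) z 1 * f z
        + fderiv ℝ (fun w => fderiv ℝ u w Complex.I) z Complex.I * f z := by
    intro z; unfold laplacian; ring
  simp only [e1, e2]
  have int1 : ∀ v : ℂ, MeasureTheory.Integrable
      (fun z => u z * fderiv ℝ (fun w => fderiv ℝ f w v) z v) := by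
    intro v
    exact (hu.continuous.mul (dv_continuous (dv_contDiff_one hf v) v)).integrable_of_hasCompactSupport (hcu.mul_right)
  have int2 : ∀ v : ℂ, MeasureTheory.Integrable
      (fun z => fderiv ℝ (fun w => fderiv ℝ u w v) z v * f z) := by
    intro v
    exact ((dv_continuous (dv_contDiff_one hu v) v).mul hf.continuous).integrable_of_hasCompactSupport
      ((dv_hasCompactSupport (dv_hasCompactSupport hcu v) v).mul_right)
  rw [MeasureTheory.integral_add (int1 1) (int1 Complex.I),
    MeasureTheory.integral_add (int2 1) (int2 Complex.I),
    green_directional hu hcu hf hcf 1, green_directional hu hcu hf hcf Complex.I]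

end Green

lemma det_restrictScalars_complex (c : ℂ) :
    ((ContinuousLinearMap.smulRight (1 : ℂ →L[ℂ] ℂ) c).restrictScalars ℝ).det
      = Complex.normSq c := by
  have h : (((ContinuousLinearMap.smulRight (1 : ℂ →L[ℂ] ℂ) c).restrictScalars ℝ)
      : ℂ →ₗ[ℝ] ℂ) = Algebra.lmul ℝ ℂ c := by
    apply LinearMap.ext
    intro z
    simp [mul_comm, smul_eq_mul]
  rw [ContinuousLinearMap.det, h, ← Algebra.norm_apply, Algebra.norm_complex_apply]

lemma exists_cutoff {K U : Set ℂ} (hK : IsCompact K) (hU : IsOpen U) (hKU : K ⊆ U) :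
    ∃ χ : ℂ → ℝ, ContDiff ℝ 2 χ ∧ HasCompactSupport χ ∧ tsupport χ ⊆ U ∧
      ∀ x ∈ K, ∀ᶠ y in nhds x, χ y = 1 := by
  obtain ⟨L, hLc, hKL, hLU⟩ := exists_compact_between hK hU hKU
  obtain ⟨χ, h1, h0, _⟩ := exists_contMDiffMap_one_nhds_of_subset_interior (modelWithCornersSelf ℝ ℂ) (n := (⊤ : ℕ∞))
    hK.isClosed hKL
  refine ⟨χ, ?_, ?_, ?_, ?_⟩
  · exact (contMDiff_iff_contDiff.mp χ.contMDiff).of_le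
      (by rw [show (2 : WithTop ℕ∞) = ((2:ℕ∞) : WithTop ℕ∞) from rfl]
          exact WithTop.coe_le_coe.mpr le_top)
  · exact HasCompactSupport.intro hLc h0
  · exact (closure_minimal (Function.support_subset_iff'.mpr h0) hLc.isClosed).trans hLU
  · intro x hx
    exact eventually_nhdsSet_iff_forall.mp h1 x hx

lemma integrableOn_of_compact_support {F : ℂ → ℝ} {U K : Set ℂ} (hU : IsOpen U)
    (hK : IsCompact K) (hKU : K ⊆ U) (hF : ContinuousOn F U)
    (h0 : ∀ z ∈ U, z ∉ K → F z = 0) : MeasureTheory.IntegrableOn F U := by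
  have h1 : MeasureTheory.IntegrableOn F K := (hF.mono hKU).integrableOn_compact hK
  have h2 : MeasureTheory.IntegrableOn F (U \ K) :=
    MeasureTheory.IntegrableOn.congr_fun MeasureTheory.integrableOn_zero
      (fun z hz => (h0 z hz.1 hz.2).symm)
      (hU.measurableSet.diff hK.isClosed.measurableSet)
  exact (h1.union h2).mono_set (fun z hz => by
    by_cases hzK : z ∈ K
    · exact Set.mem_union_left _ hzK
    · exact Set.mem_union_right _ ⟨hz, hzK⟩)

/-- Invariance of the weak LQG curvature pairing under conformal coordinate change. -/
theorem lqg_curvature_coordinate_change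
    (U V : Set ℂ) (hU : IsOpen U) (hV : IsOpen V)
    (ψ ψinv : ℂ → ℂ)
    (hψ : DifferentiableOn ℂ ψ U) (hψinv : DifferentiableOn ℂ ψinv V)
    (hbij : Set.BijOn ψ U V)
    (hleft : ∀ z ∈ U, ψinv (ψ z) = z) (hright : ∀ w ∈ V, ψ (ψinv w) = w)
    (h : ℂ → ℝ) (hh : ContinuousOn h V) (Q : ℝ)
    (f : ℂ → ℝ) (hf : ContDiff ℝ 2 f) (hsupp : HasCompactSupport f)
    (hfU : tsupport f ⊆ U) :
    ∫ z in U, (h (ψ z) + Q * Real.log ‖deriv ψ z‖) * laplacian f z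
      = ∫ w in V, h w * laplacian (Set.indicator V (fun w => f (ψinv w))) w := by
  have hKc : IsCompact (tsupport f) := hsupp
  have hKU : tsupport f ⊆ U := hfU
  have hΔf0 : ∀ z, z ∉ tsupport f → laplacian f z = 0 := by
    intro z hz
    rw [laplacian_congr (notMem_tsupport_iff_eventuallyEq.mp hz)]
    have h0 : (0 : ℂ → ℝ) = fun _ => (0:ℝ) := rfl
    rw [h0]
    simp [laplacian, fderiv_const]
  have hΔf_cont : Continuous (laplacian f) := by
    have c1 := dv_continuous (dv_contDiff_one hf 1) 1
    have cI := dv_continuous (dv_contDiff_one hf Complex.I) Complex.I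
    unfold laplacian
    exact c1.add cI
  have hψd : ∀ z ∈ U, DifferentiableAt ℂ ψ z := fun z hz =>
    hψ.differentiableAt (hU.mem_nhds hz)
  have hdU : DifferentiableOn ℂ (deriv ψ) U := ((hψ.analyticOnNhd hU).deriv).differentiableOn
  have hψ'cont : ContinuousOn (deriv ψ) U := hdU.continuousOn
  have hψ'ne : ∀ z ∈ U, deriv ψ z ≠ 0 := by
    intro z hz h0
    have h1 : HasDerivAt ψ (deriv ψ z) z := (hψd z hz).hasDerivAt
    have h2 : HasDerivAt ψinv (deriv ψinv (ψ z)) (ψ z) :=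
      (hψinv.differentiableAt (hV.mem_nhds (hbij.mapsTo hz))).hasDerivAt
    have h3 : HasDerivAt (fun w => ψinv (ψ w)) (deriv ψinv (ψ z) * deriv ψ z) z :=
      h2.comp z h1
    have hev : (fun w => w) =ᶠ[nhds z] (fun w => ψinv (ψ w)) := by
      filter_upwards [hU.mem_nhds hz] with w hw
      exact (hleft w hw).symm
    have h4 : HasDerivAt (fun w => w) (deriv ψinv (ψ z) * deriv ψ z) z :=
      h3.congr_of_eventuallyEq hev
    have h5 : deriv ψinv (ψ z) * deriv ψ z = 1 := h4.unique (hasDerivAt_id z)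
    rw [h0, mul_zero] at h5
    exact zero_ne_one h5
  have hVeq : V = ψ '' U := hbij.image_eq.symm
  set g := Set.indicator V (fun w => f (ψinv w)) with hgdef
  have hKv : IsCompact (ψ '' tsupport f) := hKc.image_of_continuousOn (hψ.continuousOn.mono hKU)
  have hKvV : ψ '' tsupport f ⊆ V := by rw [hVeq]; exact Set.image_mono hKU
  have hginv : ∀ w ∈ V, g w = f (ψinv w) := fun w hw => Set.indicator_of_mem hw _
  have hg0 : ∀ w, w ∉ ψ '' tsupport f → g w = 0 := by
    intro w hw
    by_cases hwV : w ∈ V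
    · rw [hginv w hwV]
      by_contra hne
      apply hw
      have hmem : ψinv w ∈ tsupport f := subset_tsupport f hne
      exact ⟨ψinv w, hmem, hright w hwV⟩
    · exact Set.indicator_of_notMem hwV _
  have hψinvC : ∀ w ∈ V, ContDiffAt ℝ 2 ψinv w := by
    intro w hw
    exact (((hψinv.contDiffOn hV).contDiffAt (hV.mem_nhds hw))).restrict_scalars ℝ
  have hgC2 : ContDiff ℝ 2 g := by
    rw [contDiff_iff_contDiffAt]
    intro x
    by_cases hxV : x ∈ V
    · have hev : g =ᶠ[nhds x] fun w => f (ψinv w) := by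
        filter_upwards [hV.mem_nhds hxV] with w hw using hginv w hw
      exact ((hf.contDiffAt).comp x (hψinvC x hxV)).congr_of_eventuallyEq hev
    · have hxK : x ∉ ψ '' tsupport f := fun hc => hxV (hKvV hc)
      have hev : g =ᶠ[nhds x] fun _ => 0 := by
        filter_upwards [hKv.isClosed.isOpen_compl.mem_nhds hxK] with w hw using hg0 w hw
      exact (contDiffAt_const (c := (0:ℝ))).congr_of_eventuallyEq hev
  have hgsupp : HasCompactSupport g := HasCompactSupport.intro hKv hg0
  have hlap_rel : ∀ z ∈ U, Complex.normSq (deriv ψ z) * laplacian g (ψ z) = laplacian f z := by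
    intro z hz
    have hchain := laplacian_comp_holomorphic hU hz hψ (hgC2.contDiffAt)
    have hev : (fun w => g (ψ w)) =ᶠ[nhds z] f := by
      filter_upwards [hU.mem_nhds hz] with w hw
      rw [hginv (ψ w) (hbij.mapsTo hw), hleft w hw]
    rw [← hchain, laplacian_congr hev]
  have hCoV : ∫ w in V, h w * laplacian g w = ∫ z in U, h (ψ z) * laplacian f z := by
    rw [hVeq]
    have hfderiv : ∀ z ∈ U, HasFDerivWithinAt ψ
        ((ContinuousLinearMap.smulRight (1:ℂ→L[ℂ]ℂ) (deriv ψ z)).restrictScalars ℝ) U z :=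
      fun z hz => (((hψd z hz).hasDerivAt.hasFDerivAt).restrictScalars ℝ).hasFDerivWithinAt
    rw [MeasureTheory.integral_image_eq_integral_abs_det_fderiv_smul MeasureTheory.volume
      hU.measurableSet hfderiv hbij.injOn (fun w => h w * laplacian g w)]
    apply MeasureTheory.setIntegral_congr_fun hU.measurableSet
    intro z hz
    dsimp only
    rw [det_restrictScalars_complex, abs_of_nonneg (Complex.normSq_nonneg _), smul_eq_mul,
      ← hlap_rel z hz]
    ring
  obtain ⟨χ, hχ2, hχc, hχU, hχ1⟩ := exists_cutoff hKc hU hKU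
  set l : ℂ → ℝ := fun z => Real.log ‖deriv ψ z‖ with hldef
  set u : ℂ → ℝ := fun z => χ z * Set.indicator U l z with hudef
  have hlsmooth : ∀ z ∈ U, laplacian l z = 0 ∧ ContDiffAt ℝ 2 l z := fun z hz =>
    log_abs_harmonic_and_smooth hU hdU hz (hψ'ne z hz)
  have huC2 : ContDiff ℝ 2 u := by
    rw [contDiff_iff_contDiffAt]
    intro x
    by_cases hxU : x ∈ U
    · have hev : u =ᶠ[nhds x] (fun z => χ z * l z) := by
        filter_upwards [hU.mem_nhds hxU] with w hw
        simp [hudef, Set.indicator_of_mem hw]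
      exact ((hχ2.contDiffAt).mul (hlsmooth x hxU).2).congr_of_eventuallyEq hev
    · by_cases hxs : x ∈ tsupport χ
      · exact absurd (hχU hxs) hxU
      · have hev : u =ᶠ[nhds x] (fun _ => (0:ℝ)) := by
          filter_upwards [(isClosed_tsupport χ).isOpen_compl.mem_nhds hxs] with w hw
          have hw0 : χ w = 0 := image_eq_zero_of_notMem_tsupport hw
          simp [hudef, hw0]
        exact contDiffAt_const.congr_of_eventuallyEq hev
  have husupp : HasCompactSupport u := hχc.mul_right
  have hΔu : ∀ z, laplacian u z * f z = 0 := by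
    intro z
    by_cases hzK : z ∈ tsupport f
    · have hzU := hKU hzK
      have hev : u =ᶠ[nhds z] l := by
        filter_upwards [hχ1 z hzK, hU.mem_nhds hzU] with w h1 h2
        simp [hudef, h1, Set.indicator_of_mem h2]
      rw [laplacian_congr hev, (hlsmooth z hzU).1, zero_mul]
    · rw [image_eq_zero_of_notMem_tsupport hzK, mul_zero]
  have hhψcont : ContinuousOn (fun z => h (ψ z)) U := hh.comp (hψ.continuousOn) hbij.mapsTo
  have hlcont : ContinuousOn l U := by
    apply ContinuousOn.log
    · exact continuous_norm.comp_continuousOn hψ'cont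
    · intro z hz
      simpa using hψ'ne z hz
  have hint1 : MeasureTheory.IntegrableOn (fun z => h (ψ z) * laplacian f z) U :=
    integrableOn_of_compact_support hU hKc hKU (hhψcont.mul hΔf_cont.continuousOn)
      (fun z _ hzK => by rw [hΔf0 z hzK, mul_zero])
  have hint2 : MeasureTheory.IntegrableOn (fun z => (Q * l z) * laplacian f z) U :=
    integrableOn_of_compact_support hU hKc hKU
      ((continuousOn_const.mul hlcont).mul hΔf_cont.continuousOn)
      (fun z _ hzK => by rw [hΔf0 z hzK, mul_zero])
  have hQzero : ∫ z in U, (Q * l z) * laplacian f z = 0 := by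
    have e2 : ∫ z in U, (Q * l z) * laplacian f z = ∫ z in U, Q * (u z * laplacian f z) := by
      apply MeasureTheory.setIntegral_congr_fun hU.measurableSet
      intro z hz
      dsimp only
      by_cases hzK : z ∈ tsupport f
      · have h1 : χ z = 1 := (hχ1 z hzK).self_of_nhds
        simp only [hudef, h1, Set.indicator_of_mem hz, one_mul]
        ring
      · rw [hΔf0 z hzK]
        simp
    have e3 : ∫ z in U, Q * (u z * laplacian f z) = Q * ∫ z in U, u z * laplacian f z := by
      rw [MeasureTheory.integral_const_mul]
    have e4 : ∫ z in U, u z * laplacian f z = ∫ z, u z * laplacian f z := by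
      apply MeasureTheory.setIntegral_eq_integral_of_forall_compl_eq_zero
      intro z hz
      have h0 : Set.indicator U l z = 0 := Set.indicator_of_notMem hz _
      simp [hudef, h0]
    have e5 : ∫ z, u z * laplacian f z = ∫ z, laplacian u z * f z := green huC2 husupp hf hsupp
    rw [e2, e3, e4, e5]
    simp only [hΔu]
    simp
  calc ∫ z in U, (h (ψ z) + Q * l z) * laplacian f z
      = ∫ z in U, (h (ψ z) * laplacian f z + (Q * l z) * laplacian f z) :=
        MeasureTheory.setIntegral_congr_fun hU.measurableSet (fun z _ => by ring)
    _ = (∫ z in U, h (ψ z) * laplacian f z) + ∫ z in U, (Q * l z) * laplacian f z :=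
        MeasureTheory.integral_add hint1 hint2
    _ = ∫ z in U, h (ψ z) * laplacian f z := by rw [hQzero, add_zero]
    _ = ∫ w in V, h w * laplacian g w := hCoV.symm
end

section
/- Let X be a random variable with the Poisson distribution of parameter λ > 0. Then for every x ≥ 0, ℙ(X > λ + x) ≤ exp(−x²/(2(λ + x))). -/
open MeasureTheory

/-- Bennett-type tail bound for the Poisson distribution: if `X` is Poisson with mean
`λ > 0`, then for `x ≥ 0`, `ℙ(X > λ + x) ≤ exp(−x²/(2(λ+x)))`. -/
theorem poisson_tail_bound
    {Ω : Type*} [MeasurableSpace Ω] (ℙ : Measure Ω) [IsProbabilityMeasure ℙ]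
    (X : Ω → ℕ) (hX : Measurable X) (lam : ℝ) (hlam : 0 < lam)
    (hdist : ∀ k : ℕ,
      ℙ {ω | X ω = k} = ENNReal.ofReal (Real.exp (-lam) * lam ^ k / (Nat.factorial k)))
    (x : ℝ) (hx : 0 ≤ x) :
    ℙ {ω | lam + x < (X ω : ℝ)} ≤ ENNReal.ofReal (Real.exp (-x ^ 2 / (2 * (lam + x)))) := by
  set a : ℝ := lam + x with ha
  have ha0 : 0 < a := by positivity
  set t : ℝ := x / a with ht
  have ht0 : 0 ≤ t := by positivity
  have ht1 : t ≤ 1 := by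
    rw [ht, div_le_one ha0]; linarith
  have hta : t * a = x := div_mul_cancel₀ x (ne_of_gt ha0)
  -- quadratic/cubic bound on exp t
  have hexp_t : Real.exp t ≤ 1 + t + t ^ 2 / 2 + 2 / 9 * t ^ 3 := by
    have h := Real.exp_bound' ht0 ht1 (n := 3) (by norm_num)
    simp only [Finset.sum_range_succ, Finset.sum_range_zero] at h
    norm_num [Nat.factorial] at h
    nlinarith [h]
  -- the key exponent inequality
  have hE : lam * Real.exp t - lam - t * a ≤ -x ^ 2 / (2 * a) := by
    have h1 : lam * Real.exp t - lam - t * a ≤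
        lam * (t + t ^ 2 / 2 + 2 / 9 * t ^ 3) - t * a := by nlinarith
    have h2 : lam * (t + t ^ 2 / 2 + 2 / 9 * t ^ 3) - t * a ≤ -x ^ 2 / (2 * a) := by
      rw [ht, ha, ← sub_nonneg]
      have h : -x ^ 2 / (2 * (lam+x)) - (lam * (x/(lam+x) + (x/(lam+x)) ^ 2 / 2
            + 2 / 9 * (x/(lam+x)) ^ 3) - x/(lam+x) * (lam+x))
          = x^3 * (5*lam + 9*x) / (18 * (lam+x)^3) := by
        field_simp
        ring
      rw [h]
      positivity
    linarith
  -- the weighted summands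
  set g : ℕ → ℝ := fun k => Real.exp (-lam) * lam ^ k / (Nat.factorial k) *
      Real.exp (t * ((k : ℝ) - a)) with hg
  have hg0 : ∀ k, 0 ≤ g k := by
    intro k
    apply mul_nonneg _ (Real.exp_pos _).le
    positivity
  -- summability and value of the sum
  have hsum : HasSum g (Real.exp (lam * Real.exp t - lam - t * a)) := by
    have hbase := NormedSpace.expSeries_div_hasSum_exp (lam * Real.exp t)
    rw [← Real.exp_eq_exp_ℝ] at hbase
    have h2 := hbase.mul_left (Real.exp (-lam - t * a))
    have hfun : (fun k : ℕ => Real.exp (-lam - t * a)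
        * ((lam * Real.exp t) ^ k / (Nat.factorial k))) = g := by
      funext k
      simp only [hg]
      rw [mul_pow, ← Real.exp_nat_mul,
        show t * ((k : ℝ) - a) = (k : ℝ) * t - t * a by ring,
        Real.exp_sub, Real.exp_sub]
      field_simp
    have hval : Real.exp (-lam - t * a) * Real.exp (lam * Real.exp t)
        = Real.exp (lam * Real.exp t - lam - t * a) := by
      rw [← Real.exp_add]; ring_nf
    rw [hfun, hval] at h2
    exact h2
  -- bound the tail probability by the weighted sum
  have hcover : {ω | a < (X ω : ℝ)} ⊆ ⋃ k : ℕ, {ω | X ω = k ∧ a < (k : ℝ)} := by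
    intro ω hω
    exact Set.mem_iUnion.mpr ⟨X ω, rfl, hω⟩
  have hterm : ∀ k : ℕ, ℙ {ω | X ω = k ∧ a < (k : ℝ)} ≤ ENNReal.ofReal (g k) := by
    intro k
    by_cases hk : a < (k : ℝ)
    · have : {ω | X ω = k ∧ a < (k : ℝ)} = {ω | X ω = k} := by
        ext ω; simp [hk]
      rw [this, hdist k]
      apply ENNReal.ofReal_le_ofReal
      rw [hg]
      nth_rewrite 1 [← mul_one (Real.exp (-lam) * lam ^ k / (Nat.factorial k))]
      apply mul_le_mul_of_nonneg_left _ (by positivity)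
      rw [← Real.exp_zero]
      apply Real.exp_le_exp.mpr
      have : (0:ℝ) ≤ (k : ℝ) - a := by linarith
      exact mul_nonneg ht0 this
    · have : {ω | X ω = k ∧ a < (k : ℝ)} = ∅ := by
        ext ω; simp [hk]
      rw [this]
      simp
  calc ℙ {ω | a < (X ω : ℝ)}
      ≤ ℙ (⋃ k : ℕ, {ω | X ω = k ∧ a < (k : ℝ)}) := measure_mono hcover
    _ ≤ ∑' k : ℕ, ℙ {ω | X ω = k ∧ a < (k : ℝ)} := measure_iUnion_le _
    _ ≤ ∑' k : ℕ, ENNReal.ofReal (g k) := ENNReal.tsum_le_tsum hterm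
    _ = ENNReal.ofReal (∑' k : ℕ, g k) :=
        (ENNReal.ofReal_tsum_of_nonneg hg0 hsum.summable).symm
    _ = ENNReal.ofReal (Real.exp (lam * Real.exp t - lam - t * a)) := by
        rw [hsum.tsum_eq]
    _ ≤ ENNReal.ofReal (Real.exp (-x ^ 2 / (2 * a))) := by
        exact ENNReal.ofReal_le_ofReal (Real.exp_le_exp.mpr hE)
end

section
/- Let (X_n) be a sequence of real-valued random variables on a probability space, let (a_n) and (b_n) be sequences of strictly positive real numbers, and let Y be a real-valued random variable with ℙ(Y = 0) = 0. If X_n/a_n → Y in probability and X_n/b_n → Y in probability as n → ∞, then a_n/b_n → 1. (This is the core of the proof that any normalization sequence (a_ε) for which the normalized discrete curvature sums converge in probability to the continuum curvature must be slowly varying.) -/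
open MeasureTheory Filter

/-- If `X_n/a_n → Y` and `X_n/b_n → Y` in probability, where `a_n, b_n > 0` and
`ℙ(Y = 0) = 0`, then `a_n/b_n → 1`. -/
theorem normalization_ratio_tendsto_one
    {Ω : Type*} [MeasurableSpace Ω] (ℙ : Measure Ω) [IsProbabilityMeasure ℙ]
    (X : ℕ → Ω → ℝ) (a b : ℕ → ℝ) (ha : ∀ n, 0 < a n) (hb : ∀ n, 0 < b n)
    (Y : Ω → ℝ) (hY : ℙ {ω | Y ω = 0} = 0)
    (h1 : TendstoInMeasure ℙ (fun n ω => X n ω / a n) atTop Y)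
    (h2 : TendstoInMeasure ℙ (fun n ω => X n ω / b n) atTop Y) :
    Tendsto (fun n => a n / b n) atTop (nhds 1) := by
  refine tendsto_of_subseq_tendsto fun ns hns => ?_
  have h1' : TendstoInMeasure ℙ (fun n ω => X (ns n) ω / a (ns n)) atTop Y :=
    fun ε hε => (h1 ε hε).comp hns
  have h2' : TendstoInMeasure ℙ (fun n ω => X (ns n) ω / b (ns n)) atTop Y :=
    fun ε hε => (h2 ε hε).comp hns
  obtain ⟨ms, hms, hae1⟩ := h1'.exists_seq_tendsto_ae
  have h2'' : TendstoInMeasure ℙ (fun n ω => X (ns (ms n)) ω / b (ns (ms n))) atTop Y :=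
    fun ε hε => (h2' ε hε).comp hms.tendsto_atTop
  obtain ⟨ks, hks, hae2⟩ := h2''.exists_seq_tendsto_ae
  refine ⟨fun n => ms (ks n), ?_⟩
  have hYne : ∀ᵐ ω ∂ℙ, Y ω ≠ 0 := by
    rw [ae_iff]; simpa using hY
  have hall : ∀ᵐ ω ∂ℙ, Y ω ≠ 0 ∧
      Tendsto (fun i => X (ns (ms i)) ω / a (ns (ms i))) atTop (nhds (Y ω)) ∧
      Tendsto (fun i => X (ns (ms (ks i))) ω / b (ns (ms (ks i)))) atTop (nhds (Y ω)) :=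
    hYne.and (hae1.and hae2)
  obtain ⟨ω, hω0, hc1', hc2⟩ := hall.exists
  have hc1 : Tendsto (fun i => X (ns (ms (ks i))) ω / a (ns (ms (ks i)))) atTop
      (nhds (Y ω)) := hc1'.comp hks.tendsto_atTop
  have hne : ∀ᶠ i in atTop, X (ns (ms (ks i))) ω / a (ns (ms (ks i))) ≠ 0 :=
    hc1.eventually_ne hω0
  have hratio := hc2.div hc1 hω0
  rw [div_self hω0] at hratio
  refine Tendsto.congr' ?_ hratio
  filter_upwards [hne] with i hi
  have hX : X (ns (ms (ks i))) ω ≠ 0 := fun h => hi (by simp [h])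
  have haN := (ha (ns (ms (ks i)))).ne'
  have hbN := (hb (ns (ms (ks i)))).ne'
  simp only [Pi.div_apply]
  field_simp
end

section
/- Let U, V ⊆ ℂ be open sets, let ψ : U → V be a holomorphic bijection whose inverse is also holomorphic, and let f : V → ℝ be continuously differentiable. Then the Dirichlet energy is conformally invariant: ∫_U ‖∇(f∘ψ)(z)‖² dz = ∫_V ‖∇f(w)‖² dw, where both integrals are with respect to Lebesgue measure and take values in [0, ∞]. -/
open MeasureTheory
open scoped ENNReal

private lemma opNorm_comp_mulc {F : Type*} [NormedAddCommGroup F] [NormedSpace ℝ F]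
    (A : ℂ →L[ℝ] F) (c : ℂ) (B : ℂ →L[ℝ] ℂ) (hB : ∀ x, B x = x * c) :
    ‖A.comp B‖ = ‖A‖ * ‖c‖ := by
  rcases eq_or_ne c 0 with rfl | hc
  · have hB0 : B = 0 := by ext x; simp [hB]
    simp [hB0]
  · apply le_antisymm
    · apply ContinuousLinearMap.opNorm_le_bound _ (by positivity)
      intro x
      rw [ContinuousLinearMap.comp_apply, hB]
      calc ‖A (x * c)‖ ≤ ‖A‖ * ‖x * c‖ := A.le_opNorm _
        _ = ‖A‖ * ‖c‖ * ‖x‖ := by rw [norm_mul]; ring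
    · have hcpos : (0:ℝ) < ‖c‖ := norm_pos_iff.mpr hc
      have hA : ‖A‖ ≤ ‖A.comp B‖ * ‖c‖⁻¹ := by
        apply ContinuousLinearMap.opNorm_le_bound _ (by positivity)
        intro x
        have hx : A x = (A.comp B) (x * c⁻¹) := by
          rw [ContinuousLinearMap.comp_apply, hB, mul_assoc, inv_mul_cancel₀ hc, mul_one]
        rw [hx]
        calc ‖(A.comp B) (x * c⁻¹)‖ ≤ ‖A.comp B‖ * ‖x * c⁻¹‖ := (A.comp B).le_opNorm _
          _ = ‖A.comp B‖ * ‖c‖⁻¹ * ‖x‖ := by rw [norm_mul, norm_inv]; ring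
      calc ‖A‖ * ‖c‖ ≤ (‖A.comp B‖ * ‖c‖⁻¹) * ‖c‖ := by
            exact mul_le_mul_of_nonneg_right hA (le_of_lt hcpos)
        _ = ‖A.comp B‖ := by rw [mul_assoc, inv_mul_cancel₀ (ne_of_gt hcpos), mul_one]

private lemma det_mulc (c : ℂ) (B : ℂ →L[ℝ] ℂ) (hB : ∀ x, B x = x * c) :
    B.det = Complex.normSq c := by
  have h : (B : ℂ →ₗ[ℝ] ℂ) = Algebra.lmul ℝ ℂ c := by
    apply LinearMap.ext
    intro x
    simp [hB, mul_comm]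
  rw [ContinuousLinearMap.det, h, ← Algebra.norm_apply, Algebra.norm_complex_apply]

/-- Conformal invariance of the Dirichlet energy: for a holomorphic bijection `ψ : U → V`
with holomorphic inverse and `f : V → ℝ` of class `C¹`,
`∫_U ‖∇(f∘ψ)‖² = ∫_V ‖∇f‖²` (with values in `[0,∞]`). -/
theorem dirichlet_energy_conformal_invariance
    (U V : Set ℂ) (hU : IsOpen U) (hV : IsOpen V)
    (ψ ψinv : ℂ → ℂ)
    (hψ : DifferentiableOn ℂ ψ U) (hψinv : DifferentiableOn ℂ ψinv V)
    (hbij : Set.BijOn ψ U V)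
    (hleft : ∀ z ∈ U, ψinv (ψ z) = z) (hright : ∀ w ∈ V, ψ (ψinv w) = w)
    (f : ℂ → ℝ) (hf : ContDiffOn ℝ 1 f V) :
    ∫⁻ z in U, (‖fderiv ℝ (f ∘ ψ) z‖₊ : ℝ≥0∞) ^ 2 =
      ∫⁻ w in V, (‖fderiv ℝ f w‖₊ : ℝ≥0∞) ^ 2 := by
  -- the real derivative of ψ
  set F : ℂ → (ℂ →L[ℝ] ℂ) := fun z =>
    (ContinuousLinearMap.smulRight (1 : ℂ →L[ℂ] ℂ) (deriv ψ z)).restrictScalars ℝ with hF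
  have hFapp : ∀ z x, F z x = x * deriv ψ z := by
    intro z x
    simp [hF, smul_eq_mul]
  have hFderiv : ∀ z ∈ U, HasFDerivAt ψ (F z) z := by
    intro z hz
    have h1 : DifferentiableAt ℂ ψ z := hψ.differentiableAt (hU.mem_nhds hz)
    exact h1.hasDerivAt.hasFDerivAt.restrictScalars ℝ
  have hFW : ∀ z ∈ U, HasFDerivWithinAt ψ (F z) U z := fun z hz =>
    (hFderiv z hz).hasFDerivWithinAt
  have himg : ψ '' U = V := hbij.image_eq
  have key := lintegral_image_eq_lintegral_abs_det_fderiv_mul volume hU.measurableSet hFW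
    hbij.injOn (fun w => (‖fderiv ℝ f w‖₊ : ℝ≥0∞) ^ 2)
  rw [himg] at key
  rw [key]
  apply setLIntegral_congr_fun hU.measurableSet
  intro z hz
  beta_reduce
  -- compute both sides at z ∈ U
  have hψz : ψ z ∈ V := hbij.mapsTo hz
  have hfd : DifferentiableAt ℝ f (ψ z) :=
    (hf.differentiableOn one_ne_zero).differentiableAt (hV.mem_nhds hψz)
  have hchain : fderiv ℝ (f ∘ ψ) z = (fderiv ℝ f (ψ z)).comp (F z) :=
    (hfd.hasFDerivAt.comp z (hFderiv z hz)).fderiv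
  have hdet : (F z).det = Complex.normSq (deriv ψ z) := det_mulc _ _ (hFapp z)
  have hnorm : ‖(fderiv ℝ f (ψ z)).comp (F z)‖ = ‖fderiv ℝ f (ψ z)‖ * ‖deriv ψ z‖ :=
    opNorm_comp_mulc _ _ _ (hFapp z)
  have hnn : ‖(fderiv ℝ f (ψ z)).comp (F z)‖₊ = ‖fderiv ℝ f (ψ z)‖₊ * ‖deriv ψ z‖₊ := by
    apply NNReal.coe_injective
    push_cast
    exact hnorm
  rw [hchain, hnn, hdet]
  have habs : |Complex.normSq (deriv ψ z)| = ‖deriv ψ z‖ ^ 2 := by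
    rw [abs_of_nonneg (Complex.normSq_nonneg _), ← Complex.sq_norm]
  rw [habs, ENNReal.ofReal_pow (norm_nonneg _), ofReal_norm, enorm_eq_nnnorm]
  push_cast
  ring
end
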